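/- If G is a simple graph with maximum degree Δ(G) ≥ 6, then μ_int(G) ≤ ⌈Δ(G)/2⌉. -/

import Mathlib

open SimpleGraph

/-- The set ("spectrum") of colors appearing on edges incident to vertex `v`
under the edge coloring `c`. -/
def SimpleGraph.colorSpectrum {V : Type*} (G : SimpleGraph V) (c : Sym2 V → ℕ) (v : V) :
    Set ℕ :=
  {n | ∃ w, G.Adj v w ∧ c s(v, w) = n}

/-- A set of natural numbers is an interval of consecutive integers. -/
def IsIntervalSet (S : Set ℕ) : Prop :=
  ∀ a ∈ S, ∀ b ∈ S, ∀ x, a ≤ x → x ≤ b → x ∈ S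

/-- `c` is a `k`-improper interval edge coloring of `G`: at most `k` edges with a common
endpoint share a color, and the colors at each vertex form an interval. -/
def SimpleGraph.IsImproperIntervalColoring {V : Type*} (G : SimpleGraph V)
    (c : Sym2 V → ℕ) (k : ℕ) : Prop :=
  (∀ v n, {w | G.Adj v w ∧ c s(v, w) = n}.ncard ≤ k) ∧
    ∀ v, IsIntervalSet (G.colorSpectrum c v)

/-- The interval coloring impropriety of `G`: the least `k` such that `G` has a
`k`-improper interval edge coloring. -/
noncomputable def SimpleGraph.muInt {V : Type*} (G : SimpleGraph V) : ℕ :=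
  sInf {k | ∃ c : Sym2 V → ℕ, G.IsImproperIntervalColoring c k}

section Development
open SimpleGraph Finset


namespace II



lemma card_filter_update {α : Type*} [DecidableEq α] (s : Finset α) (b : α) (hb : b ∈ s)
    (p q : α → Prop) [DecidablePred p] [DecidablePred q]
    (h : ∀ x ∈ s, x ≠ b → (p x ↔ q x)) :
    (s.filter q).card + (if p b then 1 else 0)
      = (s.filter p).card + (if q b then 1 else 0) := by
  rw [Finset.card_filter, Finset.card_filter,
      Finset.sum_eq_sum_sdiff_singleton_add hb (fun x => if p x then (1:ℕ) else 0),
      Finset.sum_eq_sum_sdiff_singleton_add hb (fun x => if q x then (1:ℕ) else 0)]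
  have he : ∑ x ∈ s \ {b}, (if q x then (1:ℕ) else 0) = ∑ x ∈ s \ {b}, (if p x then 1 else 0) := by
    apply Finset.sum_congr rfl
    intro x hx
    rw [Finset.mem_sdiff, Finset.mem_singleton] at hx
    simp only [h x hx.1 hx.2]
  omega


variable {V : Type*} [Fintype V] [DecidableEq V] (G : SimpleGraph V) [DecidableRel G.Adj]

def flip (f : Sym2 V → Bool) (e0 : Sym2 V) : Sym2 V → Bool := fun e => if e = e0 then !f e else f e

def dF (f : Sym2 V → Bool) (v : V) : ℕ :=
  ((G.neighborFinset v).filter fun w => f s(v, w)).card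

def dI (f : Sym2 V → Bool) (v : V) : ℕ :=
  (G.edgeFinset.filter fun e => v ∈ e ∧ f e).card

def DT (f0 f : Sym2 V → Bool) (v : V) : ℕ :=
  (G.edgeFinset.filter fun e => v ∈ e ∧ f0 e = true ∧ f e ≠ f0 e).card

def DFa (f0 f : Sym2 V → Bool) (v : V) : ℕ :=
  (G.edgeFinset.filter fun e => v ∈ e ∧ f0 e = false ∧ f e ≠ f0 e).card

def cleanN (f0 f : Sym2 V → Bool) : ℕ := (G.edgeFinset.filter fun e => f e = f0 e).card

lemma dF_eq_dI (f : Sym2 V → Bool) (v : V) : dF G f v = dI G f v := by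
  apply Finset.card_bij (fun w _ => s(v, w))
  · intro w hw
    simp only [mem_filter, mem_neighborFinset] at hw
    simp only [mem_filter, mem_edgeFinset, mem_edgeSet]
    exact ⟨hw.1, Sym2.mem_mk_left _ _, hw.2⟩
  · intro w₁ h₁ w₂ h₂ he
    simp only [mem_filter, mem_neighborFinset] at h₁ h₂
    rcases Sym2.eq_iff.mp he with ⟨-, h⟩ | ⟨h1, -⟩
    · exact h
    · have := h₂.1; rw [← h1] at this; exact (G.loopless.irrefl v this).elim
  · intro e he
    induction e using Sym2.ind with
    | _ x y =>
      simp only [mem_filter, mem_edgeFinset, mem_edgeSet] at he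
      obtain ⟨hadj, hv, hf⟩ := he
      rcases Sym2.mem_iff.mp hv with rfl | rfl
      · exact ⟨y, by simp only [mem_filter, mem_neighborFinset]; exact ⟨hadj, hf⟩, rfl⟩
      · refine ⟨x, by simp only [mem_filter, mem_neighborFinset]
                      refine ⟨hadj.symm, ?_⟩; rwa [Sym2.eq_swap], Sym2.eq_swap⟩

omit [DecidableEq V] in
lemma dF_le_degree (f : Sym2 V → Bool) (v : V) : dF G f v ≤ G.degree v := by
  rw [← G.card_neighborFinset_eq_degree]; exact card_filter_le _ _

omit [DecidableEq V] in
lemma dF_add_dF_neg (f : Sym2 V → Bool) (v : V) :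
    dF G f v + dF G (fun e => !f e) v = G.degree v := by
  have h := Finset.card_filter_add_card_filter_not (s := G.neighborFinset v)
    (p := fun w => f s(v, w) = true)
  rw [← G.card_neighborFinset_eq_degree, ← h, dF, dF]
  congr 1
  apply congrArg
  apply Finset.filter_congr
  intro w _
  simp



lemma sne {a b w : V} (hab : a ≠ b) (hw : w ≠ b) : s(a, w) ≠ s(a, b) := by
  intro h
  rcases Sym2.eq_iff.mp h with ⟨-, h⟩ | ⟨h1, -⟩
  · exact hw h
  · exact hab h1

lemma dF_flip_not_mem (f : Sym2 V → Bool) (e0 : Sym2 V) (v : V) (hv : v ∉ e0) :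
    dF G (flip f e0) v = dF G f v := by
  unfold dF
  congr 1
  apply Finset.filter_congr
  intro w _
  have hne : s(v, w) ≠ e0 := fun h => hv (h ▸ Sym2.mem_mk_left v w)
  simp [flip, hne]

lemma dF_flip_endpoint (f : Sym2 V → Bool) {a b : V} (hab : G.Adj a b) :
    (dF G (flip f s(a, b)) a : ℤ) = dF G f a + (if f s(a, b) then -1 else 1) := by
  have hb : b ∈ G.neighborFinset a := by rwa [mem_neighborFinset]
  have h := card_filter_update (G.neighborFinset a) b hb
    (fun w => f s(a, w) = true) (fun w => flip f s(a, b) s(a, w) = true)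
    (by
      intro w _ hw
      have : s(a, w) ≠ s(a, b) := sne hab.ne hw
      simp [flip, this])
  have hq : flip f s(a, b) s(a, b) = !f s(a, b) := by simp [flip]
  unfold dF
  cases hf : f s(a, b) <;> simp [hq, hf] at h ⊢ <;> omega

lemma DT_flip_not_mem (f0 f : Sym2 V → Bool) (e0 : Sym2 V) (v : V) (hv : v ∉ e0) :
    DT G f0 (flip f e0) v = DT G f0 f v := by
  unfold DT; congr 1; apply Finset.filter_congr; intro e _
  by_cases h : e = e0
  · subst h; simp [hv]
  · simp [flip, h]

lemma DFa_flip_not_mem (f0 f : Sym2 V → Bool) (e0 : Sym2 V) (v : V) (hv : v ∉ e0) :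
    DFa G f0 (flip f e0) v = DFa G f0 f v := by
  unfold DFa; congr 1; apply Finset.filter_congr; intro e _
  by_cases h : e = e0
  · subst h; simp [hv]
  · simp [flip, h]

lemma DT_flip_mem (f0 f : Sym2 V → Bool) (e0 : Sym2 V) (he : e0 ∈ G.edgeFinset)
    (hclean : f e0 = f0 e0) (v : V) (hv : v ∈ e0) :
    DT G f0 (flip f e0) v = DT G f0 f v + (if f0 e0 then 1 else 0) := by
  have h := card_filter_update G.edgeFinset e0 he
    (fun e => v ∈ e ∧ f0 e = true ∧ f e ≠ f0 e)
    (fun e => v ∈ e ∧ f0 e = true ∧ flip f e0 e ≠ f0 e)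
    (by intro e _ hne; simp [flip, hne])
  have hq : flip f e0 e0 = !f e0 := by simp [flip]
  unfold DT
  cases h0 : f0 e0 <;> simp [hq, hclean, h0, hv] at h ⊢ <;> omega

lemma DFa_flip_mem (f0 f : Sym2 V → Bool) (e0 : Sym2 V) (he : e0 ∈ G.edgeFinset)
    (hclean : f e0 = f0 e0) (v : V) (hv : v ∈ e0) :
    DFa G f0 (flip f e0) v = DFa G f0 f v + (if f0 e0 then 0 else 1) := by
  have h := card_filter_update G.edgeFinset e0 he
    (fun e => v ∈ e ∧ f0 e = false ∧ f e ≠ f0 e)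
    (fun e => v ∈ e ∧ f0 e = false ∧ flip f e0 e ≠ f0 e)
    (by intro e _ hne; simp [flip, hne])
  have hq : flip f e0 e0 = !f e0 := by simp [flip]
  unfold DFa
  cases h0 : f0 e0 <;> simp [hq, hclean, h0, hv] at h ⊢ <;> omega

lemma cleanN_flip (f0 f : Sym2 V → Bool) (e0 : Sym2 V) (he : e0 ∈ G.edgeFinset)
    (hclean : f e0 = f0 e0) :
    cleanN G f0 (flip f e0) + 1 = cleanN G f0 f := by
  have h := card_filter_update G.edgeFinset e0 he
    (fun e => f e = f0 e) (fun e => flip f e0 e = f0 e)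
    (by intro e _ hne; simp [flip, hne])
  have hq : flip f e0 e0 = !f e0 := by simp [flip]
  unfold cleanN
  simp [hq, hclean] at h
  omega

lemma incid_card (v : V) : (G.edgeFinset.filter fun e => v ∈ e).card = G.degree v := by
  rw [← card_incidenceFinset_eq_degree, incidenceFinset_eq_filter]

lemma dI_split (f0 : Sym2 V → Bool) (v : V) :
    dI G f0 v + (G.edgeFinset.filter fun e => v ∈ e ∧ f0 e = false).card = G.degree v := by
  rw [← incid_card G v, dI]
  rw [← Finset.filter_filter (fun e => v ∈ e) (fun e => f0 e = true),
      ← Finset.filter_filter (fun e => v ∈ e) (fun e => f0 e = false)]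
  rw [← Finset.card_filter_add_card_filter_not
        (s := G.edgeFinset.filter fun e => v ∈ e) (p := fun e => f0 e = true)]
  congr 1
  apply congrArg
  apply Finset.filter_congr
  intro e _
  simp

lemma key_identity (f0 f : Sym2 V → Bool) (v : V) :
    dF G f v + DT G f0 f v = dF G f0 v + DFa G f0 f v := by
  rw [dF_eq_dI G f v, dF_eq_dI G f0 v]
  unfold dI DT DFa
  rw [Finset.card_filter, Finset.card_filter, Finset.card_filter, Finset.card_filter,
     ← Finset.sum_add_distrib, ← Finset.sum_add_distrib]
  apply Finset.sum_congr rfl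
  intro e _
  by_cases hv : v ∈ e
  · cases h0 : f0 e <;> cases h1 : f e <;> simp [hv, h0, h1]
  · simp [hv]

lemma DT_le (f0 f : Sym2 V → Bool) (v : V) : DT G f0 f v ≤ dF G f0 v := by
  rw [dF_eq_dI G f0 v]
  apply Finset.card_le_card
  intro e he
  simp only [mem_filter] at he ⊢
  exact ⟨he.1, he.2.1, he.2.2.1⟩

lemma DFa_le (f0 f : Sym2 V → Bool) (v : V) :
    DFa G f0 f v + dF G f0 v ≤ G.degree v := by
  rw [dF_eq_dI G f0 v, ← dI_split G f0 v, Nat.add_comm]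
  apply Nat.add_le_add_left
  apply Finset.card_le_card
  intro e he
  simp only [mem_filter] at he ⊢
  exact ⟨he.1, he.2.1, he.2.2.1⟩

lemma exists_clean_edge (f0 f : Sym2 V → Bool) (z : V) (b : Bool)
    (hcount : (G.edgeFinset.filter fun e => z ∈ e ∧ f0 e = b ∧ f e ≠ f0 e).card
        < (G.edgeFinset.filter fun e => z ∈ e ∧ f0 e = b).card) :
    ∃ e ∈ G.edgeFinset, z ∈ e ∧ f0 e = b ∧ f e = f0 e := by
  by_contra hcon
  push_neg at hcon
  have hle : (G.edgeFinset.filter fun e => z ∈ e ∧ f0 e = b).card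
      ≤ (G.edgeFinset.filter fun e => z ∈ e ∧ f0 e = b ∧ f e ≠ f0 e).card := by
    apply Finset.card_le_card
    intro e he
    simp only [mem_filter] at he ⊢
    exact ⟨he.1, he.2.1, he.2.2, hcon e he.1 he.2.1 he.2.2⟩
  omega

lemma exists_adj_of_mem (e : Sym2 V) (he : e ∈ G.edgeFinset) (z : V) (hz : z ∈ e) :
    ∃ w, G.Adj z w ∧ e = s(z, w) := by
  induction e using Sym2.ind with
  | _ x y =>
    rw [mem_edgeFinset, mem_edgeSet] at he
    rcases Sym2.mem_iff.mp hz with rfl | rfl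
    · exact ⟨y, he, rfl⟩
    · exact ⟨x, he.symm, Sym2.eq_swap⟩

def Phi (l u : V → ℕ) (f : Sym2 V → Bool) : ℕ :=
  ∑ v : V, ((l v - dF G f v) + (dF G f v - u v))

lemma Phi_eq_zero (l u : V → ℕ) (f : Sym2 V → Bool) (h : Phi G l u f = 0) :
    ∀ v, l v ≤ dF G f v ∧ dF G f v ≤ u v := by
  intro v
  have := Finset.sum_eq_zero_iff.mp h v (mem_univ v)
  omega

lemma phi_lt_of (l u : V → ℕ) (hlu : ∀ v, l v ≤ u v) (f0 f : Sym2 V → Bool) (v0 z : V)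
    (hother : ∀ v, v ≠ v0 → v ≠ z → dF G f v = dF G f0 v)
    (hv0 : v0 ≠ z → dF G f v0 + 1 = dF G f0 v0) (hviol : u v0 + 1 ≤ dF G f0 v0)
    (hz : z ≠ v0 → (l z ≤ dF G f z ∧ dF G f z ≤ dF G f0 z) ∨
          (dF G f z ≤ u z ∧ dF G f0 z ≤ dF G f z))
    (hself : v0 = z → (dF G f v0 + 2 = dF G f0 v0 ∧ l v0 + 1 ≤ u v0)) :
    Phi G l u f < Phi G l u f0 := by
  apply Finset.sum_lt_sum
  · intro v _
    by_cases h0 : v = v0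
    · subst h0
      by_cases h1 : v = z
      · obtain ⟨h2, h3⟩ := hself h1; have := hlu v; omega
      · have h2 := hv0 h1; have := hlu v; omega
    by_cases h1 : v = z
    · subst h1
      have h2 := hz h0
      rcases h2 with ⟨h, h'⟩ | ⟨h, h'⟩ <;> omega
    · rw [hother v h0 h1]
  · refine ⟨v0, mem_univ _, ?_⟩
    have := hlu v0
    by_cases h1 : v0 = z
    · obtain ⟨h2, h3⟩ := hself h1; omega
    · have h2 := hv0 h1; omega


section Inner

variable (l u : V → ℕ) (f0 : Sym2 V → Bool) (v0 : V)

def Inv (f : Sym2 V → Bool) (z : V) (σ : Bool) : Prop :=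
  ∀ v, (DT G f0 f v : ℤ) - DFa G f0 f v =
    (if v = v0 then 1 else 0) + (if v = z then (if σ then 1 else -1) else 0)

lemma Inv_step (f : Sym2 V → Bool) (z w : V) (σ : Bool) (hInv : Inv G f0 v0 f z σ)
    (hzw : z ≠ w) (he : s(z, w) ∈ G.edgeFinset) (hclean : f s(z, w) = f0 s(z, w))
    (hb : f0 s(z, w) = !σ) :
    Inv G f0 v0 (flip f s(z, w)) w (!σ) := by
  intro v
  have h1 := hInv v
  by_cases hmem : v ∈ s(z, w)
  · have hDT := DT_flip_mem G f0 f s(z, w) he hclean v hmem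
    have hDF := DFa_flip_mem G f0 f s(z, w) he hclean v hmem
    cases σ with
    | true =>
      have hb' : f0 s(z, w) = false := by simpa using hb
      rw [hb'] at hDT hDF
      norm_num at hDT hDF
      rcases Sym2.mem_iff.mp hmem with rfl | rfl
      · rw [if_pos rfl] at h1
        rw [if_neg hzw]
        push_cast [hDT, hDF]
        norm_num at h1 ⊢
        linarith
      · rw [if_neg (Ne.symm hzw)] at h1
        rw [if_pos rfl]
        push_cast [hDT, hDF]
        norm_num at h1 ⊢
        linarith
    | false =>
      have hb' : f0 s(z, w) = true := by simpa using hb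
      rw [hb'] at hDT hDF
      norm_num at hDT hDF
      rcases Sym2.mem_iff.mp hmem with rfl | rfl
      · rw [if_pos rfl] at h1
        rw [if_neg hzw]
        push_cast [hDT, hDF]
        norm_num at h1 ⊢
        linarith
      · rw [if_neg (Ne.symm hzw)] at h1
        rw [if_pos rfl]
        push_cast [hDT, hDF]
        norm_num at h1 ⊢
        linarith
  · have hDT := DT_flip_not_mem G f0 f s(z, w) v hmem
    have hDF := DFa_flip_not_mem G f0 f s(z, w) v hmem
    have hvz : v ≠ z := fun h => hmem (h ▸ Sym2.mem_mk_left z w)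
    have hvw : v ≠ w := fun h => hmem (h ▸ Sym2.mem_mk_right z w)
    rw [if_neg hvz] at h1
    rw [hDT, hDF, if_neg hvw]
    linarith

lemma inner (hC1 : ∀ v, l v ≤ G.degree v / 2) (hC2 : ∀ v, (G.degree v + 1) / 2 ≤ u v)
    (hC3 : ∀ v, 1 ≤ G.degree v → l v + 1 ≤ u v)
    (hviol : u v0 + 1 ≤ dF G f0 v0) :
    ∀ N : ℕ, ∀ f : Sym2 V → Bool, ∀ z : V, ∀ σ : Bool,
      cleanN G f0 f ≤ N → Inv G f0 v0 f z σ →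
      ∃ f', Phi G l u f' < Phi G l u f0 := by
  have hlu : ∀ v, l v ≤ u v := by
    intro v
    rcases Nat.eq_zero_or_pos (G.degree v) with h | h
    · have h1 := hC1 v; have h2 := hC2 v; omega
    · have := hC3 v h; omega
  have hdeg0 : 1 ≤ G.degree v0 := by
    have := dF_le_degree G f0 v0; omega
  have hgap0 : l v0 + 1 ≤ u v0 := hC3 v0 hdeg0
  intro N
  induction N using Nat.strong_induction_on with
  | _ N IH =>
  intro f z σ hN hInv
  have hkey : ∀ v, (dF G f v : ℤ) + DT G f0 f v = dF G f0 v + DFa G f0 f v := by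
    intro v; exact_mod_cast key_identity G f0 f v
  cases σ with
  | true =>
    by_cases hs : l z ≤ dF G f z
    · -- success
      refine ⟨f, phi_lt_of G l u hlu f0 f v0 z ?_ ?_ hviol ?_ ?_⟩
      · intro v hv0 hvz
        have h1 := hInv v; have h2 := hkey v
        rw [if_neg hv0, if_neg hvz] at h1
        omega
      · intro hne
        have h1 := hInv v0; have h2 := hkey v0
        rw [if_pos rfl, if_neg hne] at h1
        omega
      · intro hne
        have h1 := hInv z; have h2 := hkey z
        rw [if_neg hne, if_pos rfl, if_pos rfl] at h1
        exact Or.inl ⟨hs, by omega⟩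
      · intro heq
        subst heq
        have h1 := hInv v0; have h2 := hkey v0
        rw [if_pos rfl, if_pos rfl, if_pos rfl] at h1
        exact ⟨by omega, hgap0⟩
    · -- extend along a clean (f0 = false) edge at z
      push_neg at hs
      have hzv0 : z ≠ v0 := by
        intro h
        subst h
        have h1 := hInv z; have h2 := hkey z
        rw [if_pos rfl, if_pos rfl, if_pos rfl] at h1
        omega
      have hex : ∃ e ∈ G.edgeFinset, z ∈ e ∧ f0 e = false ∧ f e = f0 e := by
        apply exists_clean_edge
        have h1 := hInv z; have h2 := hkey z
        rw [if_neg hzv0, if_pos rfl, if_pos rfl] at h1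
        have h3 := DT_le G f0 f z
        have h4 := dI_split G f0 z
        have h5 := hC1 z
        have h6 := dF_eq_dI G f0 z
        show DFa G f0 f z < _
        omega
      obtain ⟨e, he, hze, hb, hclean⟩ := hex
      obtain ⟨w, hadj, rfl⟩ := exists_adj_of_mem G e he z hze
      have hcl := cleanN_flip G f0 f _ he hclean
      have hInv' : Inv G f0 v0 (flip f s(z, w)) w (!true) :=
        Inv_step G f0 v0 f z w true hInv hadj.ne he hclean (by simpa using hb)
      exact IH (cleanN G f0 (flip f s(z, w))) (by omega) (flip f s(z, w)) w false
        (le_refl _) hInv'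
  | false =>
    by_cases hs : dF G f z ≤ u z
    · -- success
      have hzv0 : z ≠ v0 := by
        intro h
        subst h
        have h1 := hInv z; have h2 := hkey z
        rw [if_pos rfl, if_pos rfl, if_neg (by decide : ¬false = true)] at h1
        omega
      refine ⟨f, phi_lt_of G l u hlu f0 f v0 z ?_ ?_ hviol ?_ ?_⟩
      · intro v hv0 hvz
        have h1 := hInv v; have h2 := hkey v
        rw [if_neg hv0, if_neg hvz] at h1
        omega
      · intro hne
        have h1 := hInv v0; have h2 := hkey v0
        rw [if_pos rfl, if_neg hne] at h1
        omega
      · intro hne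
        have h1 := hInv z; have h2 := hkey z
        rw [if_neg hne, if_pos rfl, if_neg (by decide : ¬false = true)] at h1
        exact Or.inr ⟨hs, by omega⟩
      · intro heq
        exact absurd heq.symm hzv0
    · -- extend along a clean (f0 = true) edge at z
      push_neg at hs
      have hex : ∃ e ∈ G.edgeFinset, z ∈ e ∧ f0 e = true ∧ f e = f0 e := by
        apply exists_clean_edge
        have h1 := hInv z; have h2 := hkey z
        rw [if_pos rfl] at h1
        have h3 : DFa G f0 f z + dF G f0 z ≤ G.degree z := DFa_le G f0 f z
        have h5 := hC2 z
        have h6 := dF_eq_dI G f0 z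
        rw [if_neg (by decide : ¬false = true)] at h1
        show DT G f0 f z < dI G f0 z
        by_cases hzv0 : z = v0
        · rw [if_pos hzv0] at h1
          omega
        · rw [if_neg hzv0] at h1
          omega
      obtain ⟨e, he, hze, hb, hclean⟩ := hex
      obtain ⟨w, hadj, rfl⟩ := exists_adj_of_mem G e he z hze
      have hcl := cleanN_flip G f0 f _ he hclean
      have hInv' : Inv G f0 v0 (flip f s(z, w)) w (!false) :=
        Inv_step G f0 v0 f z w false hInv hadj.ne he hclean (by simpa using hb)
      exact IH (cleanN G f0 (flip f s(z, w))) (by omega) (flip f s(z, w)) w true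
        (le_refl _) hInv'

end Inner

lemma upperstep (l u : V → ℕ) (hC1 : ∀ v, l v ≤ G.degree v / 2)
    (hC2 : ∀ v, (G.degree v + 1) / 2 ≤ u v)
    (hC3 : ∀ v, 1 ≤ G.degree v → l v + 1 ≤ u v)
    (f0 : Sym2 V → Bool) (v0 : V) (hviol : u v0 + 1 ≤ dF G f0 v0) :
    ∃ f', Phi G l u f' < Phi G l u f0 := by
  have hpos : 0 < dF G f0 v0 := by omega
  rw [dF] at hpos
  obtain ⟨w, hw⟩ := Finset.card_pos.mp hpos
  rw [mem_filter, mem_neighborFinset] at hw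
  obtain ⟨hadj, hb⟩ := hw
  have he : s(v0, w) ∈ G.edgeFinset := by rw [mem_edgeFinset, mem_edgeSet]; exact hadj
  have hbase : Inv G f0 v0 f0 v0 false := by
    intro v
    by_cases h : v = v0 <;> simp [DT, DFa, h]
  have hInv1 : Inv G f0 v0 (flip f0 s(v0, w)) w (!false) :=
    Inv_step G f0 v0 f0 v0 w false hbase hadj.ne he rfl (by simpa using hb)
  exact inner G l u f0 v0 hC1 hC2 hC3 hviol (cleanN G f0 (flip f0 s(v0, w)))
    (flip f0 s(v0, w)) w true (le_refl _) (by simpa using hInv1)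

lemma Phi_neg (l u : V → ℕ) (hl : ∀ v, l v ≤ G.degree v) (g : Sym2 V → Bool) :
    Phi G (fun v => G.degree v - u v) (fun v => G.degree v - l v) g
      = Phi G l u (fun e => !g e) := by
  unfold Phi
  apply Finset.sum_congr rfl
  intro v _
  have h1 : dF G (fun e => !g e) v = G.degree v - dF G g v := by
    have := dF_add_dF_neg G g v; omega
  have h2 : dF G g v ≤ G.degree v := dF_le_degree G g v
  rw [h1]
  have := hl v
  beta_reduce
  omega

lemma stepdown (l u : V → ℕ) (hC1 : ∀ v, l v ≤ G.degree v / 2)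
    (hC2 : ∀ v, (G.degree v + 1) / 2 ≤ u v)
    (hC3 : ∀ v, 1 ≤ G.degree v → l v + 1 ≤ u v)
    (f : Sym2 V → Bool) (hne : Phi G l u f ≠ 0) :
    ∃ f', Phi G l u f' < Phi G l u f := by
  have hl : ∀ v, l v ≤ G.degree v := by intro v; have := hC1 v; omega
  have hex : ∃ v, dF G f v < l v ∨ u v < dF G f v := by
    by_contra h
    push_neg at h
    apply hne
    apply Finset.sum_eq_zero
    intro v _
    have := h v
    omega
  obtain ⟨v0, hv⟩ := hex
  rcases hv with hlow | hup
  · -- lower violation: pass to the negated coloring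
    have hC1' : ∀ v, (fun v => G.degree v - u v) v ≤ G.degree v / 2 := by
      intro v; have := hC2 v; beta_reduce; omega
    have hC2' : ∀ v, (G.degree v + 1) / 2 ≤ (fun v => G.degree v - l v) v := by
      intro v; have := hC1 v; beta_reduce; omega
    have hC3' : ∀ v, 1 ≤ G.degree v →
        (fun v => G.degree v - u v) v + 1 ≤ (fun v => G.degree v - l v) v := by
      intro v hd
      have h1 := hC3 v hd; have h2 := hC1 v; have h3 := hC2 v
      beta_reduce; omega
    have hviol' : (fun v => G.degree v - l v) v0 + 1 ≤ dF G (fun e => !f e) v0 := by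
      have h1 := dF_add_dF_neg G f v0
      have h2 := hl v0
      beta_reduce
      omega
    obtain ⟨f'', hf''⟩ := upperstep G (fun v => G.degree v - u v) (fun v => G.degree v - l v)
      hC1' hC2' hC3' (fun e => !f e) v0 hviol'
    refine ⟨fun e => !f'' e, ?_⟩
    have e1 : Phi G (fun v => G.degree v - u v) (fun v => G.degree v - l v) f''
        = Phi G l u (fun e => !f'' e) := Phi_neg G l u hl f''
    have e2 := Phi_neg G l u hl (fun e => !f e)
    simp only [Bool.not_not] at e2
    rw [← e1, ← e2]
    exact hf''
  · exact upperstep G l u hC1 hC2 hC3 f v0 (by omega)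

theorem main_lemma (l u : V → ℕ) (hC1 : ∀ v, l v ≤ G.degree v / 2)
    (hC2 : ∀ v, (G.degree v + 1) / 2 ≤ u v)
    (hC3 : ∀ v, 1 ≤ G.degree v → l v + 1 ≤ u v) :
    ∃ f : Sym2 V → Bool, ∀ v, l v ≤ dF G f v ∧ dF G f v ≤ u v := by
  have hdesc : ∀ n : ℕ, ∀ f : Sym2 V → Bool, Phi G l u f ≤ n → ∃ f', Phi G l u f' = 0 := by
    intro n
    induction n with
    | zero => intro f h; exact ⟨f, by omega⟩
    | succ n ih =>
      intro f h
      by_cases h0 : Phi G l u f = 0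
      · exact ⟨f, h0⟩
      · obtain ⟨f', hf'⟩ := stepdown G l u hC1 hC2 hC3 f h0
        exact ih f' (by omega)
  obtain ⟨f, hf⟩ := hdesc (Phi G l u (fun _ => false)) (fun _ => false) (le_refl _)
  exact ⟨f, Phi_eq_zero G l u f hf⟩

theorem exists_good_coloring (K : ℕ) (hK : 3 ≤ K) (hdeg : ∀ v, G.degree v ≤ 2 * K) :
    ∃ c : Sym2 V → ℕ,
      (∀ v, ((G.neighborFinset v).filter fun w => c s(v, w) = 0).card ≤ K ∧
            ((G.neighborFinset v).filter fun w => c s(v, w) = 1).card ≤ K ∧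
            ((G.neighborFinset v).filter fun w => c s(v, w) = 2).card ≤ K) ∧
      (∀ e, c e ≤ 2) ∧
      (∀ v, 2 ≤ G.degree v →
        0 < ((G.neighborFinset v).filter fun w => c s(v, w) = 1).card) := by
  obtain ⟨f1, hf1⟩ := main_lemma G (fun v => G.degree v - K)
    (fun v => if G.degree v ≤ 1 then G.degree v
              else if 2 * K - 2 ≤ G.degree v - 1 then 2 * K - 2 else G.degree v - 1)
    (by intro v; have := hdeg v; omega)
    (by intro v; have := hdeg v; split
        · omega
        · split <;> omega)
    (by intro v hd; have := hdeg v; split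
        · omega
        · split <;> omega)
  let G2 : SimpleGraph V :=
    { Adj := fun a b => G.Adj a b ∧ f1 s(a, b) = true,
      symm := by
        constructor
        intro a b h
        refine ⟨h.1.symm, ?_⟩
        rw [Sym2.eq_swap]
        exact h.2,
      loopless := ⟨fun a h => G.loopless.irrefl a h.1⟩ }
  haveI : DecidableRel G2.Adj := fun a b => instDecidableAnd
  have hnb : ∀ v, G2.neighborFinset v = (G.neighborFinset v).filter fun w => f1 s(v, w) := by
    intro v
    ext w
    simp only [mem_neighborFinset, mem_filter]
    exact Iff.rfl
  have hd2 : ∀ v, G2.degree v = dF G f1 v := by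
    intro v
    rw [← card_neighborFinset_eq_degree, hnb]
    rfl
  obtain ⟨f2, hf2⟩ := main_lemma G2 (fun v => (G2.degree v + 1) / 2 - 1)
    (fun v => G2.degree v / 2 + 1)
    (by intro v; omega)
    (by intro v; omega)
    (by intro v _; omega)
  -- facts about the three color classes at each vertex
  have key : ∀ v,
      ((G.neighborFinset v).filter fun w =>
        (if f1 s(v, w) then (if f2 s(v, w) then 0 else 2) else 1) = 0).card = dF G2 f2 v ∧
      ((G.neighborFinset v).filter fun w =>
        (if f1 s(v, w) then (if f2 s(v, w) then 0 else 2) else 1) = 1).card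
        + dF G f1 v = G.degree v ∧
      ((G.neighborFinset v).filter fun w =>
        (if f1 s(v, w) then (if f2 s(v, w) then 0 else 2) else 1) = 2).card
        + dF G2 f2 v = dF G f1 v := by
    intro v
    have e0 : dF G2 f2 v
        = ((G.neighborFinset v).filter fun w => f1 s(v, w) = true ∧ f2 s(v, w) = true).card := by
      rw [dF, hnb, Finset.filter_filter]
    refine ⟨?_, ?_, ?_⟩
    · rw [e0]
      congr 1
      apply Finset.filter_congr
      intro w _
      cases h1 : f1 s(v, w) <;> cases h2 : f2 s(v, w) <;> simp [h1, h2]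
    · rw [← card_neighborFinset_eq_degree, dF]
      rw [← Finset.card_filter_add_card_filter_not
            (s := G.neighborFinset v) (p := fun w => f1 s(v, w) = true)]
      rw [Nat.add_comm]
      congr 1
      apply congrArg
      apply Finset.filter_congr
      intro w _
      cases h1 : f1 s(v, w) <;> cases h2 : f2 s(v, w) <;> simp [h1, h2]
    · have hsplit := Finset.card_filter_add_card_filter_not
        (s := (G.neighborFinset v).filter fun w => f1 s(v, w) = true)
        (p := fun w => f2 s(v, w) = true)
      rw [Finset.filter_filter, Finset.filter_filter] at hsplit
      rw [e0]
      rw [show dF G f1 v = ((G.neighborFinset v).filter fun w => f1 s(v, w) = true).card from rfl]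
      rw [← hsplit]
      rw [Nat.add_comm]
      congr 1
      apply congrArg
      apply Finset.filter_congr
      intro w _
      cases h1 : f1 s(v, w) <;> cases h2 : f2 s(v, w) <;> simp [h1, h2]
  refine ⟨fun e => if f1 e then (if f2 e then 0 else 2) else 1, ?_, ?_, ?_⟩
  · intro v
    beta_reduce
    obtain ⟨h1l, h1u⟩ := hf1 v
    obtain ⟨h2l, h2u⟩ := hf2 v
    rw [hd2 v] at h2l h2u
    obtain ⟨k0, k1, k2⟩ := key v
    have hm : dF G f1 v ≤ G.degree v := dF_le_degree G f1 v
    have hboth : dF G f1 v ≤ G.degree v ∧ (2 ≤ G.degree v → dF G f1 v ≤ 2 * K - 2) := by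
      constructor
      · exact hm
      · intro h2d
        rw [if_neg (by omega)] at h1u
        split at h1u <;> omega
    refine ⟨?_, ?_, ?_⟩
    · rw [k0]
      rcases Nat.lt_or_ge (G.degree v) 2 with hs | hs
      · omega
      · have := hboth.2 hs; omega
    · omega
    · rcases Nat.lt_or_ge (G.degree v) 2 with hs | hs
      · omega
      · have := hboth.2 hs; omega
  · intro e
    by_cases h1 : f1 e <;> by_cases h2 : f2 e <;> simp [h1, h2]
  · intro v hdv
    beta_reduce
    obtain ⟨h1l, h1u⟩ := hf1 v
    obtain ⟨k0, k1, k2⟩ := key v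
    rw [if_neg (by omega)] at h1u
    have hub : dF G f1 v ≤ G.degree v - 1 := by split at h1u <;> omega
    omega


end II
end Development

/-- If `G` has maximum degree at least 6, then `μ_int(G) ≤ ⌈Δ(G)/2⌉`. -/
theorem statement16 {V : Type*} [Fintype V] (G : SimpleGraph V) [DecidableRel G.Adj]
    (hΔ : 6 ≤ G.maxDegree) :
    G.muInt ≤ (G.maxDegree + 1) / 2 := by
  classical
  set K := (G.maxDegree + 1) / 2 with hKdef
  have hK : 3 ≤ K := by omega
  have hdeg : ∀ v, G.degree v ≤ 2 * K := by
    intro v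
    have := G.degree_le_maxDegree v
    omega
  obtain ⟨c, hcount, hle2, hmid⟩ := II.exists_good_coloring G K hK hdeg
  apply Nat.sInf_le
  refine ⟨c, ?_, ?_⟩
  · intro v n
    have hset : {w | G.Adj v w ∧ c s(v, w) = n}
        = ↑((G.neighborFinset v).filter fun w => c s(v, w) = n) := by
      ext w
      simp [SimpleGraph.mem_neighborFinset]
    rw [hset, Set.ncard_coe_finset]
    obtain ⟨h0, h1, h2⟩ := hcount v
    match n with
    | 0 => exact h0
    | 1 => exact h1
    | 2 => exact h2
    | (n + 3) =>
      have hemp : ((G.neighborFinset v).filter fun w => c s(v, w) = n + 3) = ∅ := by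
        apply Finset.filter_false_of_mem
        intro w _
        have := hle2 s(v, w)
        omega
      rw [hemp]
      simp
  · intro v a ha b hb x hax hxb
    obtain ⟨wa, hwa, hca⟩ := ha
    obtain ⟨wb, hwb, hcb⟩ := hb
    have ha2 : a ≤ 2 := hca ▸ hle2 _
    have hb2 : b ≤ 2 := hcb ▸ hle2 _
    rcases eq_or_ne x a with rfl | hxa
    · exact ⟨wa, hwa, hca⟩
    rcases eq_or_ne x b with rfl | hxb'
    · exact ⟨wb, hwb, hcb⟩
    have hx1 : x = 1 := by omega
    have ha0 : a = 0 := by omega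
    have hbb : b = 2 := by omega
    subst hx1; subst ha0; subst hbb
    have hne : wa ≠ wb := by
      intro h
      rw [h, hcb] at hca
      omega
    have hdv : 2 ≤ G.degree v := by
      rw [← SimpleGraph.card_neighborFinset_eq_degree]
      have hsub : ({wa, wb} : Finset V) ⊆ G.neighborFinset v := by
        intro y hy
        rcases Finset.mem_insert.mp hy with rfl | hy
        · rwa [SimpleGraph.mem_neighborFinset]
        · rw [Finset.mem_singleton] at hy
          subst hy
          rwa [SimpleGraph.mem_neighborFinset]
      calc 2 = ({wa, wb} : Finset V).card := (Finset.card_pair hne).symm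
        _ ≤ (G.neighborFinset v).card := Finset.card_le_card hsub
    have hpos := hmid v hdv
    obtain ⟨w1, hw1⟩ := Finset.card_pos.mp hpos
    rw [Finset.mem_filter, SimpleGraph.mem_neighborFinset] at hw1
    exact ⟨w1, hw1.1, hw1.2⟩
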